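/- Let R be a commutative ring and let C be a commutative R-algebra that is free of rank 3 as an R-module, with basis 1, ω, θ normalized so that ωθ ∈ R. Then there exist a, b, c, d ∈ R such that ωθ = −ad, ω² = −ac + bω − aθ, and θ² = −bd + dω − cθ. -/

import Mathlib

/-- A cubic algebra `C` over `R` with basis `1, ω, θ` normalized so that `ωθ ∈ R` has a
multiplication table of the stated shape: there are `a, b, c, d ∈ R` with
`ωθ = -ad`, `ω² = -ac + bω - aθ`, `θ² = -bd + dω - cθ`. -/
theorem cubic_algebra_multiplication_table
    (R : Type*) [CommRing R] (C : Type*) [CommRing C] [Algebra R C]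
    (e : Module.Basis (Fin 3) R C) (he : e 0 = 1)
    (hnorm : ∃ r : R, e 1 * e 2 = algebraMap R C r) :
    ∃ a b c d : R,
      e 1 * e 2 = algebraMap R C (-(a * d)) ∧
      e 1 * e 1 = algebraMap R C (-(a * c)) + b • e 1 - a • e 2 ∧
      e 2 * e 2 = algebraMap R C (-(b * d)) + d • e 1 - c • e 2 := by
  obtain ⟨n, hn⟩ := hnorm
  have hsum : ∀ x : C, x = (e.repr x 0) • (1:C) + (e.repr x 1) • e 1 + (e.repr x 2) • e 2 := by
    intro x
    have h := e.sum_repr x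
    rw [Fin.sum_univ_three, he] at h
    exact h.symm
  set p := e.repr (e 1 * e 1) 0
  set q := e.repr (e 1 * e 1) 1
  set r := e.repr (e 1 * e 1) 2
  set s := e.repr (e 2 * e 2) 0
  set t := e.repr (e 2 * e 2) 1
  set u := e.repr (e 2 * e 2) 2
  have h1 : e 1 * e 1 = algebraMap R C p + algebraMap R C q * e 1 + algebraMap R C r * e 2 := by
    have := hsum (e 1 * e 1)
    simpa [Algebra.smul_def] using this
  have h2 : e 2 * e 2 = algebraMap R C s + algebraMap R C t * e 1 + algebraMap R C u * e 2 := by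
    have := hsum (e 2 * e 2)
    simpa [Algebra.smul_def] using this
  have key : ∀ x0 x1 x2 : R, x0 • (1:C) + x1 • e 1 + x2 • e 2 = 0 → x0 = 0 ∧ x1 = 0 ∧ x2 = 0 := by
    intro x0 x1 x2 h
    have hli := e.linearIndependent
    rw [Fintype.linearIndependent_iff] at hli
    have h0 := hli ![x0, x1, x2] (by rw [Fin.sum_univ_three]; simpa [he] using h)
    exact ⟨h0 0, h0 1, h0 2⟩
  -- first associativity: (ω²)θ = ω(ωθ)
  have c1 := key (q * n + r * s) (r * t - n) (p + r * u) (by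
    simp only [Algebra.smul_def, map_add, map_mul, map_sub]
    linear_combination (-(e 2)) * h1 + (-(algebraMap R C r)) * h2 + (e 1 - algebraMap R C q) * hn)
  -- second associativity: ω(θ²) = (ωθ)θ
  have c2 := key (u * n + t * p) (s + t * q) (t * r - n) (by
    simp only [Algebra.smul_def, map_add, map_mul, map_sub]
    linear_combination (-(e 1)) * h2 + (-(algebraMap R C t)) * h1 + (e 2 - algebraMap R C u) * hn)
  obtain ⟨-, hc1b, hc1c⟩ := c1
  obtain ⟨-, hc2b, -⟩ := c2
  refine ⟨-r, q, -u, t, ?_, ?_, ?_⟩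
  · rw [hn]
    congr 1
    linear_combination -hc1b
  · rw [h1, show -(-r * -u) = p from by linear_combination -hc1c]
    simp only [Algebra.smul_def, map_neg]
    ring
  · rw [h2, show -(q * t) = s from by linear_combination -hc2b]
    simp only [Algebra.smul_def, map_neg]
    ring
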